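/- Let (P,d) be a finite metric space, let k ≥ 1, let ĉ₁, …, ĉ_k ∈ P be points with radii r̂₁, …, r̂_k ≥ 0 such that every point of P lies in some ball B(ĉ_i, r̂_i), and let G be the associated access graph on vertex set P. For each connected component Z of G, choose a center ĉ_Z ∈ {ĉ₁,…,ĉ_k} ∩ Z whose radius is maximal among the centers belonging to Z. Then the clustering that assigns every point of a component Z to the center ĉ_Z has min-sum-radii cost Σ_{Z ∈ CC(G)} max_{v ∈ Z} d(ĉ_Z, v) ≤ (2 − 1/k) · Σ_{j=1}^k r̂_j, where CC(G) denotes the set of connected components of G. -/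

import Mathlib

/-- The access graph on a metric space `P` associated to centers `c₁, …, c_k` with radii
`r₁, …, r_k`: distinct vertices `x` and `y` are adjacent iff there is an `i ≤ k` with
`cᵢ ∈ {x, y}` and `d(x, y) ≤ rᵢ`. -/
def accessGraph {P : Type*} [MetricSpace P] {k : ℕ} (c : Fin k → P) (r : Fin k → ℝ) :
    SimpleGraph P :=
  SimpleGraph.fromRel fun x y => ∃ i, c i = x ∧ dist x y ≤ r i

section Aux

variable {P : Type*} [MetricSpace P] {k : ℕ} (cHat : Fin k → P) (rHat : Fin k → ℝ)

/-- The intersection graph on center indices. -/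
def ballGraph : SimpleGraph (Fin k) :=
  SimpleGraph.fromRel fun i j => dist (cHat i) (cHat j) ≤ rHat i + rHat j

lemma ballGraph_adj_dist {i j : Fin k} (h : (ballGraph cHat rHat).Adj i j) :
    dist (cHat i) (cHat j) ≤ rHat i + rHat j := by
  rcases h with ⟨hne, h | h⟩
  · exact h
  · rw [dist_comm] at h; linarith

lemma ball_reach {x : P} {p : Fin k} (h : dist x (cHat p) ≤ rHat p) :
    (accessGraph cHat rHat).Reachable x (cHat p) := by
  by_cases hx : x = cHat p
  · exact hx ▸ SimpleGraph.Reachable.refl x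
  · exact (SimpleGraph.Adj.reachable ⟨hx, Or.inr ⟨p, rfl, by rwa [dist_comm]⟩⟩)

lemma walk_dist_le (hr : ∀ i, 0 ≤ rHat i) :
    ∀ {p q : Fin k} (W : (ballGraph cHat rHat).Walk p q),
      dist (cHat p) (cHat q) ≤ 2 * (W.support.map rHat).sum - rHat p - rHat q := by
  intro p q W
  induction W with
  | nil => simp; linarith
  | @cons p p' q h W ih =>
      have h1 := ballGraph_adj_dist cHat rHat h
      calc dist (cHat p) (cHat q) ≤ dist (cHat p) (cHat p') + dist (cHat p') (cHat q) :=
            dist_triangle _ _ _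
        _ ≤ (rHat p + rHat p') + (2 * (W.support.map rHat).sum - rHat p' - rHat q) := by
            linarith
        _ = 2 * (((SimpleGraph.Walk.cons h W).support.map rHat).sum) - rHat p - rHat q := by
            simp [SimpleGraph.Walk.support_cons]; ring

/-- From a walk in the access graph between balls, get a walk in the ball graph whose
support centers are all reachable from the start. -/
lemma center_walk (hr : ∀ i, 0 ≤ rHat i) :
    ∀ {x y : P} (w : (accessGraph cHat rHat).Walk x y) (p q : Fin k),
      dist x (cHat p) ≤ rHat p → dist y (cHat q) ≤ rHat q →
      ∃ W : (ballGraph cHat rHat).Walk p q,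
        ∀ i ∈ W.support, (accessGraph cHat rHat).Reachable x (cHat i) := by
  intro x y w
  induction w with
  | nil =>
      intro p q hp hq
      by_cases hpq : p = q
      · subst hpq
        exact ⟨SimpleGraph.Walk.nil, by simpa using ball_reach cHat rHat hp⟩
      · refine ⟨SimpleGraph.Walk.cons ⟨hpq, Or.inl ?_⟩ SimpleGraph.Walk.nil, ?_⟩
        · calc dist (cHat p) (cHat q) ≤ dist (cHat p) _ + dist _ (cHat q) := dist_triangle _ _ _
            _ ≤ rHat p + rHat q := by rw [dist_comm] at hp; linarith
        · intro i hi
          change i ∈ [p, q] at hi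
          simp only [SimpleGraph.Walk.support_cons, SimpleGraph.Walk.support_nil,
            List.mem_cons, List.mem_singleton] at hi
          rcases hi with rfl | rfl | h
          · exact ball_reach cHat rHat hp
          · exact ball_reach cHat rHat hq
          · exact absurd h (by simp)
  | @cons x z y hadj w ih =>
      intro p q hp hq
      -- extract the center serving the edge x-z
      have hcenter : ∃ i, dist x (cHat i) ≤ rHat i ∧ dist z (cHat i) ≤ rHat i := by
        rcases hadj with ⟨hne, ⟨i, hix, hd⟩ | ⟨i, hiz, hd⟩⟩
        · exact ⟨i, by rw [hix]; simpa using hr i, by rw [hix, dist_comm]; exact hd⟩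
        · exact ⟨i, by rw [hiz, dist_comm]; exact hd, by rw [hiz]; simpa using hr i⟩
      obtain ⟨i, hxi, hzi⟩ := hcenter
      obtain ⟨W', hW'⟩ := ih i q hzi hq
      have hreach : ∀ j ∈ W'.support, (accessGraph cHat rHat).Reachable x (cHat j) :=
        fun j hj => (hadj.reachable).trans (hW' j hj)
      by_cases hpi : p = i
      · subst hpi; exact ⟨W', hreach⟩
      · refine ⟨SimpleGraph.Walk.cons ⟨hpi, Or.inl ?_⟩ W', ?_⟩
        · calc dist (cHat p) (cHat i) ≤ dist (cHat p) x + dist x (cHat i) := dist_triangle _ _ _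
            _ ≤ rHat p + rHat i := by rw [dist_comm] at hp; linarith
        · intro j hj
          change j ∈ p :: W'.support at hj
          simp only [SimpleGraph.Walk.support_cons, List.mem_cons] at hj
          rcases hj with rfl | hj
          · exact ball_reach cHat rHat hp
          · exact hreach j hj

end Aux

/-- suppose every point of the finite metric space `P` lies in one of the
`k ≥ 1` balls `B(cHat i, rHat i)`, and for every connected component `Z` of the access
graph choose (via `sel`) a center belonging to `Z` of maximal radius among the centers in
`Z`.  Then the clustering assigning every point of a component `Z` to the chosen center
has min-sum-radii cost `∑_Z max_{v ∈ Z} d(cHat (sel Z), v) ≤ (2 − 1/k)·∑_i rHat i`. -/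
theorem stmt9 {P : Type*} [Fintype P] [MetricSpace P] (k : ℕ) (hk : 1 ≤ k)
    (cHat : Fin k → P) (rHat : Fin k → ℝ) (hrHat : ∀ i, 0 ≤ rHat i)
    (hcov : ∀ p : P, ∃ i, dist p (cHat i) ≤ rHat i)
    (sel : (accessGraph cHat rHat).ConnectedComponent → Fin k)
    (hsel : ∀ Z, cHat (sel Z) ∈ Z.supp)
    (hselmax : ∀ Z, ∀ i : Fin k, cHat i ∈ Z.supp → rHat i ≤ rHat (sel Z)) :
    ∑ᶠ Z : (accessGraph cHat rHat).ConnectedComponent,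
        sSup {x | ∃ v ∈ Z.supp, x = dist (cHat (sel Z)) v} ≤
      (2 - 1 / (k : ℝ)) * ∑ i : Fin k, rHat i := by
  classical
  haveI : Fintype (accessGraph cHat rHat).ConnectedComponent := Fintype.ofFinite _
  -- the fiber of centers in component Z
  set F : (accessGraph cHat rHat).ConnectedComponent → Finset (Fin k) :=
    fun Z => Finset.univ.filter (fun i => (accessGraph cHat rHat).connectedComponentMk (cHat i) = Z) with hF
  -- Key per-component bound
  have key : ∀ Z : (accessGraph cHat rHat).ConnectedComponent, ∀ v ∈ Z.supp,
      dist (cHat (sel Z)) v ≤ 2 * ∑ i ∈ F Z, rHat i - rHat (sel Z) := by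
    intro Z v hv
    obtain ⟨m, hm⟩ := hcov v
    have hreach : (accessGraph cHat rHat).Reachable (cHat (sel Z)) v := by
      have h1 : (accessGraph cHat rHat).connectedComponentMk (cHat (sel Z)) = Z :=
        (SimpleGraph.ConnectedComponent.mem_supp_iff _ _).mp (hsel Z)
      have h2 : (accessGraph cHat rHat).connectedComponentMk v = Z :=
        (SimpleGraph.ConnectedComponent.mem_supp_iff _ _).mp hv
      exact SimpleGraph.ConnectedComponent.exact (h1.trans h2.symm)
    obtain ⟨w⟩ := hreach
    obtain ⟨W, hW⟩ := center_walk cHat rHat hrHat w (sel Z) m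
      (by simpa using hrHat (sel Z)) hm
    -- pass to a path
    set Wp := W.toPath with hWp
    have hnodup : (Wp : (ballGraph cHat rHat).Walk (sel Z) m).support.Nodup :=
      Wp.2.support_nodup
    have hsub : ∀ i ∈ (Wp : (ballGraph cHat rHat).Walk (sel Z) m).support, i ∈ F Z := by
      intro i hi
      have := hW i (SimpleGraph.Walk.support_toPath_subset W hi)
      simp only [hF, Finset.mem_filter, Finset.mem_univ, true_and]
      have h1 : (accessGraph cHat rHat).connectedComponentMk (cHat (sel Z)) = Z :=
        (SimpleGraph.ConnectedComponent.mem_supp_iff _ _).mp (hsel Z)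
      rw [← h1]
      exact (SimpleGraph.ConnectedComponent.sound this).symm
    have hsum : (((Wp : (ballGraph cHat rHat).Walk (sel Z) m).support).map rHat).sum
        ≤ ∑ i ∈ F Z, rHat i := by
      rw [← List.sum_toFinset _ hnodup]
      exact Finset.sum_le_sum_of_subset_of_nonneg
        (fun i hi => hsub i (List.mem_toFinset.mp hi)) (fun i _ _ => hrHat i)
    have hd := walk_dist_le cHat rHat hrHat (Wp : (ballGraph cHat rHat).Walk (sel Z) m)
    calc dist (cHat (sel Z)) v ≤ dist (cHat (sel Z)) (cHat m) + dist (cHat m) v :=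
          dist_triangle _ _ _
      _ ≤ (2 * ∑ i ∈ F Z, rHat i - rHat (sel Z) - rHat m) + rHat m := by
          rw [dist_comm (cHat m) v]; linarith
      _ = 2 * ∑ i ∈ F Z, rHat i - rHat (sel Z) := by ring
  -- bound each sSup
  have hsSup : ∀ Z : (accessGraph cHat rHat).ConnectedComponent,
      sSup {x | ∃ v ∈ Z.supp, x = dist (cHat (sel Z)) v}
        ≤ 2 * ∑ i ∈ F Z, rHat i - rHat (sel Z) := by
    intro Z
    have hselF : sel Z ∈ F Z := by
      simp only [hF, Finset.mem_filter, Finset.mem_univ, true_and]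
      exact (SimpleGraph.ConnectedComponent.mem_supp_iff _ _).mp (hsel Z)
    have hnn : 0 ≤ 2 * ∑ i ∈ F Z, rHat i - rHat (sel Z) := by
      have h1 : rHat (sel Z) ≤ ∑ i ∈ F Z, rHat i :=
        Finset.single_le_sum (fun i _ => hrHat i) hselF
      have := hrHat (sel Z); linarith
    refine Real.sSup_le ?_ hnn
    rintro x ⟨v, hv, rfl⟩
    exact key Z v hv
  rw [finsum_eq_sum_of_fintype]
  have step1 : ∑ Z : (accessGraph cHat rHat).ConnectedComponent,
      sSup {x | ∃ v ∈ Z.supp, x = dist (cHat (sel Z)) v}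
      ≤ ∑ Z : (accessGraph cHat rHat).ConnectedComponent, (2 * ∑ i ∈ F Z, rHat i - rHat (sel Z)) :=
    Finset.sum_le_sum (fun Z _ => hsSup Z)
  have hfib : ∑ Z : (accessGraph cHat rHat).ConnectedComponent, ∑ i ∈ F Z, rHat i = ∑ i : Fin k, rHat i := by
    exact Finset.sum_fiberwise_of_maps_to (fun i _ => Finset.mem_univ _) rHat
  have hselsum : (1 / (k : ℝ)) * ∑ i : Fin k, rHat i
      ≤ ∑ Z : (accessGraph cHat rHat).ConnectedComponent, rHat (sel Z) := by
    have hkpos : (0 : ℝ) < k := by exact_mod_cast hk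
    rw [div_mul_eq_mul_div, one_mul, div_le_iff₀ hkpos]
    calc ∑ i : Fin k, rHat i
        ≤ ∑ _i : Fin k, ∑ Z : (accessGraph cHat rHat).ConnectedComponent, rHat (sel Z) := by
          refine Finset.sum_le_sum (fun i _ => ?_)
          calc rHat i ≤ rHat (sel ((accessGraph cHat rHat).connectedComponentMk (cHat i))) :=
                hselmax _ i rfl
            _ ≤ ∑ Z : (accessGraph cHat rHat).ConnectedComponent, rHat (sel Z) :=
                Finset.single_le_sum (fun Z _ => hrHat (sel Z)) (Finset.mem_univ _)
      _ = (∑ Z : (accessGraph cHat rHat).ConnectedComponent, rHat (sel Z)) * k := by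
          simp [Finset.sum_const, mul_comm]
  calc ∑ Z : (accessGraph cHat rHat).ConnectedComponent, sSup {x | ∃ v ∈ Z.supp, x = dist (cHat (sel Z)) v}
      ≤ ∑ Z : (accessGraph cHat rHat).ConnectedComponent, (2 * ∑ i ∈ F Z, rHat i - rHat (sel Z)) := step1
    _ = 2 * ∑ i : Fin k, rHat i - ∑ Z : (accessGraph cHat rHat).ConnectedComponent, rHat (sel Z) := by
        rw [Finset.sum_sub_distrib, ← Finset.mul_sum, hfib]
    _ ≤ 2 * ∑ i : Fin k, rHat i - (1 / (k : ℝ)) * ∑ i : Fin k, rHat i := by linarith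
    _ = (2 - 1 / (k : ℝ)) * ∑ i : Fin k, rHat i := by ring
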